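/- For real r > 0 and φ ∈ [0, π/3], define h(r,φ) = e^{r cos φ} + e^{r cos(φ + 2π/3)} + e^{r cos(φ - 2π/3)}. Then for fixed φ ∈ [0, π/3], the function r ↦ h(r,φ) is strictly increasing on (0,∞). -/

import Mathlib

lemma aux_nonneg (r c : ℝ) (hr : 0 < r) : 0 ≤ c * (Real.exp (r * c) - 1) := by
  rcases le_or_gt 0 c with h | h
  · have : (1:ℝ) ≤ Real.exp (r * c) := Real.one_le_exp (by positivity)
    have := sub_nonneg.mpr this
    positivity
  · have hrc : r * c < 0 := mul_neg_of_pos_of_neg hr h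
    have : Real.exp (r * c) < 1 := by
      rw [← Real.exp_zero]; exact Real.exp_lt_exp.mpr hrc
    nlinarith [Real.exp_pos (r * c)]

theorem stmt_8 (φ : ℝ) (hφ : φ ∈ Set.Icc 0 (Real.pi / 3)) :
    StrictMonoOn (fun r : ℝ =>
      Real.exp (r * Real.cos φ) + Real.exp (r * Real.cos (φ + 2 * Real.pi / 3)) +
        Real.exp (r * Real.cos (φ - 2 * Real.pi / 3)))
      (Set.Ioi 0) := by
  obtain ⟨hφ0, hφ1⟩ := hφ
  have hpi := Real.pi_pos
  set c1 := Real.cos φ with hc1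
  set c2 := Real.cos (φ + 2 * Real.pi / 3) with hc2
  set c3 := Real.cos (φ - 2 * Real.pi / 3) with hc3
  have hcos23 : Real.cos (2 * Real.pi / 3) = -(1/2) := by
    rw [show (2 * Real.pi / 3) = Real.pi - Real.pi / 3 by ring, Real.cos_pi_sub,
      Real.cos_pi_div_three]
  have hsum : c1 + c2 + c3 = 0 := by
    rw [hc1, hc2, hc3, show φ + 2 * Real.pi / 3 = φ + 2 * Real.pi / 3 from rfl,
      Real.cos_add, Real.cos_sub, hcos23]
    ring
  have hc1half : (1/2 : ℝ) ≤ c1 := by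
    rw [hc1, show (1/2 : ℝ) = Real.cos (Real.pi / 3) from Real.cos_pi_div_three.symm]
    apply Real.cos_le_cos_of_nonneg_of_le_pi hφ0 (by linarith) hφ1
  apply StrictMonoOn.mono ?_ (le_refl _)
  apply strictMonoOn_of_deriv_pos (convex_Ioi 0)
  · fun_prop
  · intro r hr
    rw [interior_Ioi] at hr
    have h1 : HasDerivAt (fun x : ℝ => Real.exp (x * c1)) (Real.exp (r * c1) * c1) r :=
      (hasDerivAt_mul_const c1).exp
    have h2 : HasDerivAt (fun x : ℝ => Real.exp (x * c2)) (Real.exp (r * c2) * c2) r :=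
      (hasDerivAt_mul_const c2).exp
    have h3 : HasDerivAt (fun x : ℝ => Real.exp (x * c3)) (Real.exp (r * c3) * c3) r :=
      (hasDerivAt_mul_const c3).exp
    have hD : HasDerivAt (fun x : ℝ => Real.exp (x * c1) + Real.exp (x * c2) + Real.exp (x * c3))
        (Real.exp (r * c1) * c1 + Real.exp (r * c2) * c2 + Real.exp (r * c3) * c3) r :=
      (h1.add h2).add h3
    rw [hD.deriv]
    have k2 := aux_nonneg r c2 hr
    have k3 := aux_nonneg r c3 hr
    have hr' : (0:ℝ) < r := hr
    have hrc1 : 0 < r * c1 := by nlinarith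
    have k1 : 0 < c1 * (Real.exp (r * c1) - 1) := by
      have : (1:ℝ) < Real.exp (r * c1) := by rw [← Real.exp_zero]; exact Real.exp_lt_exp.mpr hrc1
      nlinarith
    nlinarith
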